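/- Let $\lambda \ge 1$ and set $c = 1/(2\lambda^2+8\lambda+6)$, $u_0=u_4=c\lambda^2$, $u_1=u_3=c\lambda$, $u_2=c$. Then $\sum_{i=0}^4 \binom{4}{i} u_i = 1$ and $u_i^2 \le u_{i-1}u_{i+1}$ for $i=1,2,3$; moreover, if $\lambda > 1$ there exists no random variable $W$ with values in $[0,1]$ such that $u_i = E[W^i(1-W)^{4-i}]$ for all $0\le i\le 4$. -/
import Mathlib


open MeasureTheory

theorem stmt_6 (lam : ℝ) (hlam : 1 ≤ lam)
    (c : ℝ) (hc : c = 1 / (2*lam^2 + 8*lam + 6))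
    (u : ℕ → ℝ) (hu0 : u 0 = c * lam^2) (hu1 : u 1 = c * lam) (hu2 : u 2 = c)
    (hu3 : u 3 = c * lam) (hu4 : u 4 = c * lam^2) :
    (∑ i ∈ Finset.range 5, ((4:ℕ).choose i : ℝ) * u i = 1) ∧
    (∀ i, 1 ≤ i → i ≤ 3 → (u i)^2 ≤ u (i-1) * u (i+1)) ∧
    (1 < lam →
      ¬ ∃ (Ω : Type) (_ : MeasurableSpace Ω) (μ : Measure Ω) (_ : IsProbabilityMeasure μ)
          (W : Ω → ℝ), Measurable W ∧ (∀ ω, W ω ∈ Set.Icc (0:ℝ) 1) ∧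
          ∀ i ≤ 4, u i = ∫ ω, (W ω)^i * (1 - W ω)^(4-i) ∂μ) := by
  have hden : (2*lam^2 + 8*lam + 6) ≠ 0 := by nlinarith
  have hdpos : 0 < 2*lam^2 + 8*lam + 6 := by nlinarith
  have hcpos : 0 < c := by rw [hc]; exact one_div_pos.mpr hdpos
  refine ⟨?_, ?_, ?_⟩
  · simp only [Finset.sum_range_succ, Finset.sum_range_zero, hu0, hu1, hu2, hu3, hu4]
    norm_num [Nat.choose, hc]
    field_simp
    ring
  · intro i h1 h3
    interval_cases i
    · rw [hu0, hu1, hu2]; nlinarith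
    · rw [hu1, hu2, hu3]
      have h : 0 ≤ c^2 * (lam^2 - 1) := mul_nonneg (sq_nonneg c) (by nlinarith)
      nlinarith [h]
    · rw [hu2, hu3, hu4]; nlinarith
  · rintro hlt ⟨Ω, mΩ, μ, hprob, W, hW, hWmem, hmom⟩
    have hint : ∀ i j : ℕ, Integrable (fun ω => (W ω)^i * (1 - W ω)^j) μ := by
      intro i j
      apply Integrable.mono' (integrable_const (1:ℝ))
      · exact ((hW.pow_const i).mul ((measurable_const.sub hW).pow_const j)).aestronglyMeasurable
      · filter_upwards with ω
        have h0 := (hWmem ω).1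
        have h1 := (hWmem ω).2
        rw [Real.norm_eq_abs, abs_of_nonneg (mul_nonneg (pow_nonneg h0 i) (pow_nonneg (by linarith) j))]
        have e1 : (W ω)^i ≤ 1 := pow_le_one₀ h0 h1
        have e2 : (1 - W ω)^j ≤ 1 := pow_le_one₀ (by linarith) (by linarith)
        nlinarith [pow_nonneg h0 i, pow_nonneg (by linarith : (0:ℝ) ≤ 1 - W ω) j]
    have key : ∀ a : ℝ,
        (∫ ω, ((W ω)^2 - lam * (W ω * (1 - W ω)))^2 ∂μ)
          = u 4 - 2*lam * u 3 + lam^2 * u 2 := by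
      intro a
      have e : (fun ω => ((W ω)^2 - lam * (W ω * (1 - W ω)))^2)
          = fun ω => ((W ω)^4 * (1 - W ω)^0 - (2*lam) * ((W ω)^3 * (1 - W ω)^1))
              + lam^2 * ((W ω)^2 * (1 - W ω)^2) := by
        funext ω; ring
      have A : Integrable (fun ω => (W ω)^4 * (1 - W ω)^0 - (2*lam) * ((W ω)^3 * (1 - W ω)^1)) μ :=
        (hint 4 0).sub ((hint 3 1).const_mul (2*lam))
      rw [e, integral_add A ((hint 2 2).const_mul (lam^2)),
        integral_sub (hint 4 0) ((hint 3 1).const_mul (2*lam)),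
        integral_const_mul, integral_const_mul,
        hmom 4 (by norm_num), hmom 3 (by norm_num), hmom 2 (by norm_num)]
    have key2 :
        (∫ ω, ((1 - W ω)^2 - lam * (W ω * (1 - W ω)))^2 ∂μ)
          = u 0 - 2*lam * u 1 + lam^2 * u 2 := by
      have e : (fun ω => ((1 - W ω)^2 - lam * (W ω * (1 - W ω)))^2)
          = fun ω => ((W ω)^0 * (1 - W ω)^4 - (2*lam) * ((W ω)^1 * (1 - W ω)^3))
              + lam^2 * ((W ω)^2 * (1 - W ω)^2) := by
        funext ω; ring
      have A : Integrable (fun ω => (W ω)^0 * (1 - W ω)^4 - (2*lam) * ((W ω)^1 * (1 - W ω)^3)) μ :=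
        (hint 0 4).sub ((hint 1 3).const_mul (2*lam))
      rw [e, integral_add A ((hint 2 2).const_mul (lam^2)),
        integral_sub (hint 0 4) ((hint 1 3).const_mul (2*lam)),
        integral_const_mul, integral_const_mul,
        hmom 0 (by norm_num), hmom 1 (by norm_num), hmom 2 (by norm_num)]
    have hzero1 : (∫ ω, ((W ω)^2 - lam * (W ω * (1 - W ω)))^2 ∂μ) = 0 := by
      rw [key 0, hu4, hu3, hu2]; ring
    have hzero2 : (∫ ω, ((1 - W ω)^2 - lam * (W ω * (1 - W ω)))^2 ∂μ) = 0 := by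
      rw [key2, hu0, hu1, hu2]; ring
    have hint1 : Integrable (fun ω => ((W ω)^2 - lam * (W ω * (1 - W ω)))^2) μ := by
      have e : (fun ω => ((W ω)^2 - lam * (W ω * (1 - W ω)))^2)
          = fun ω => ((W ω)^4 * (1 - W ω)^0 - (2*lam) * ((W ω)^3 * (1 - W ω)^1))
              + lam^2 * ((W ω)^2 * (1 - W ω)^2) := by
        funext ω; ring
      rw [e]
      exact ((hint 4 0).sub ((hint 3 1).const_mul (2*lam))).add ((hint 2 2).const_mul (lam^2))
    have hint2 : Integrable (fun ω => ((1 - W ω)^2 - lam * (W ω * (1 - W ω)))^2) μ := by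
      have e : (fun ω => ((1 - W ω)^2 - lam * (W ω * (1 - W ω)))^2)
          = fun ω => ((W ω)^0 * (1 - W ω)^4 - (2*lam) * ((W ω)^1 * (1 - W ω)^3))
              + lam^2 * ((W ω)^2 * (1 - W ω)^2) := by
        funext ω; ring
      rw [e]
      exact ((hint 0 4).sub ((hint 1 3).const_mul (2*lam))).add ((hint 2 2).const_mul (lam^2))
    have hae1 : ∀ᵐ ω ∂μ, ((W ω)^2 - lam * (W ω * (1 - W ω)))^2 = 0 := by
      have := (integral_eq_zero_iff_of_nonneg (fun ω => sq_nonneg _) hint1).mp hzero1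
      filter_upwards [this] with ω h using h
    have hae2 : ∀ᵐ ω ∂μ, ((1 - W ω)^2 - lam * (W ω * (1 - W ω)))^2 = 0 := by
      have := (integral_eq_zero_iff_of_nonneg (fun ω => sq_nonneg _) hint2).mp hzero2
      filter_upwards [this] with ω h using h
    obtain ⟨ω, h1, h2⟩ := (hae1.and hae2).exists
    have e1 : (W ω)^2 = lam * (W ω * (1 - W ω)) := by nlinarith [sq_nonneg ((W ω)^2 - lam * (W ω * (1 - W ω)))]
    have e2 : (1 - W ω)^2 = lam * (W ω * (1 - W ω)) := by nlinarith [sq_nonneg ((1 - W ω)^2 - lam * (W ω * (1 - W ω)))]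
    have h3 : W ω = 1/2 := by linear_combination (e1 - e2)/2
    rw [h3] at e1
    norm_num at e1
    linarith
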